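/- Tightness of the quantum bound: the process operator W₂₂₂ = |GHZ⟩⟨GHZ| + σ_x^A |GHZ⟩⟨GHZ| σ_x^A on three qubits A′, A, B, with |GHZ⟩ = (|000⟩+|111⟩)/√2, together with suitable qubit POVM assemblage E_{A|X} (measurements of ±σ_x, ±σ_z), post-measurement states ρ_A, and final measurement F_B of (σ_x+σ_z)/√2, yields Σ_{b₀,b₁} inf_x Σ_a Tr[(E_{a|x} ⊗ ρ_a ⊗ F_{b_a}) W₂₂₂] = 2 − √2. -/

import Mathlib

open scoped Kronecker ComplexOrder
open Finset Matrix

/-- The GHZ state vector `(|000⟩ + |111⟩)/√2` on three qubits. -/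
noncomputable def ghz : Fin 2 × Fin 2 × Fin 2 → ℂ :=
  fun v => if v.1 = v.2.1 ∧ v.2.1 = v.2.2 then ((1 / Real.sqrt 2 : ℝ) : ℂ) else 0

/-- `σ_x^A |GHZ⟩`: the GHZ vector with a Pauli-X applied to the middle qubit. -/
noncomputable def ghzX : Fin 2 × Fin 2 × Fin 2 → ℂ :=
  fun v => ghz (v.1, (v.2.1 + 1, v.2.2))

/-- The process operator `W₂₂₂ = |GHZ⟩⟨GHZ| + σ_x^A |GHZ⟩⟨GHZ| σ_x^A` on the
three qubits `A′`, `A`, `B`. -/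
noncomputable def W222 : Matrix (Fin 2 × Fin 2 × Fin 2) (Fin 2 × Fin 2 × Fin 2) ℂ :=
  Matrix.of fun v w =>
    ghz v * (starRingEnd ℂ) (ghz w) + ghzX v * (starRingEnd ℂ) (ghzX w)

lemma tr_formula (A B C : Matrix (Fin 2) (Fin 2) ℂ) :
    ((A ⊗ₖ (B ⊗ₖ C)) * W222).trace = (1/2 : ℂ) *
      (A 0 0 * B 0 0 * C 0 0 + A 0 1 * B 0 1 * C 0 1 +
       A 1 0 * B 1 0 * C 1 0 + A 1 1 * B 1 1 * C 1 1 +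
       A 0 0 * B 1 1 * C 0 0 + A 0 1 * B 1 0 * C 0 1 +
       A 1 0 * B 0 1 * C 1 0 + A 1 1 * B 0 0 * C 1 1) := by
  have h2c : ((1 / Real.sqrt 2 : ℝ) : ℂ) * ((1 / Real.sqrt 2 : ℝ) : ℂ) = 1/2 := by
    rw [← Complex.ofReal_mul, div_mul_div_comm, Real.mul_self_sqrt (le_of_lt two_pos)]
    norm_num
  simp (config := { decide := true }) only [Matrix.trace, Matrix.diag, Matrix.mul_apply,
    Fintype.sum_prod_type, Fin.sum_univ_two, W222, ghz, ghzX, Matrix.kroneckerMap_apply,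
    Matrix.of_apply, Complex.conj_ofReal]
  norm_num
  rw [show ((Real.sqrt 2 : ℝ) : ℂ)⁻¹ * ((Real.sqrt 2 : ℝ):ℂ)⁻¹ = 1/2 by
    simpa [one_div] using h2c]
  ring_nf

/-- real→complex trace formula -/
lemma tr_re (A B C : Matrix (Fin 2) (Fin 2) ℝ) :
    ((((A.map Complex.ofReal) ⊗ₖ ((B.map Complex.ofReal) ⊗ₖ (C.map Complex.ofReal)))
        * W222).trace).re = (1/2 : ℝ) *
      (A 0 0 * B 0 0 * C 0 0 + A 0 1 * B 0 1 * C 0 1 +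
       A 1 0 * B 1 0 * C 1 0 + A 1 1 * B 1 1 * C 1 1 +
       A 0 0 * B 1 1 * C 0 0 + A 0 1 * B 1 0 * C 0 1 +
       A 1 0 * B 0 1 * C 1 0 + A 1 1 * B 0 0 * C 1 1) := by
  rw [tr_formula]
  rw [show (1/2 : ℂ) = ((1/2 : ℝ) : ℂ) by norm_num]
  simp only [Matrix.map_apply, ← Complex.ofReal_mul, ← Complex.ofReal_add,
    Complex.ofReal_re]

noncomputable def qv : ℝ := Real.sqrt 2 / 4

noncomputable def Er : Fin 2 → Fin 4 → Matrix (Fin 2) (Fin 2) ℝ := fun a x =>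
  if x = 0 then (if a = 0 then !![1,0;0,0] else !![0,0;0,1])
  else if x = 1 then (if a = 0 then !![0,0;0,1] else !![1,0;0,0])
  else if x = 2 then (if a = 0 then !![1/2,1/2;1/2,1/2] else !![1/2,-(1/2);-(1/2),1/2])
  else (if a = 0 then !![1/2,-(1/2);-(1/2),1/2] else !![1/2,1/2;1/2,1/2])

noncomputable def Rr : Fin 2 → Matrix (Fin 2) (Fin 2) ℝ := fun a =>
  if a = 0 then !![1/2,1/2;1/2,1/2] else !![1/2,-(1/2);-(1/2),1/2]

noncomputable def Fr : Fin 2 → Matrix (Fin 2) (Fin 2) ℝ := fun b =>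
  if b = 0 then !![1/2+qv, qv; qv, 1/2-qv] else !![1/2-qv, -qv; -qv, 1/2+qv]

lemma sqrt2_sq : Real.sqrt 2 * Real.sqrt 2 = 2 := Real.mul_self_sqrt (by norm_num)
lemma sqrt2_nonneg : (0:ℝ) ≤ Real.sqrt 2 := Real.sqrt_nonneg 2
lemma sqrt2_le_two : Real.sqrt 2 ≤ 2 := by nlinarith [sqrt2_sq, sqrt2_nonneg]

lemma psd_of_proj {M : Matrix (Fin 2) (Fin 2) ℂ} (h : M = Mᴴ * M) : M.PosSemidef := by
  rw [h]; exact Matrix.posSemidef_conjTranspose_mul_self M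

lemma qv_sq : qv * qv = 1/8 := by
  rw [qv]; rw [div_mul_div_comm, sqrt2_sq]; norm_num

lemma qv_sqc : (qv:ℂ) * (qv:ℂ) = 1/8 := by
  rw [← Complex.ofReal_mul, qv_sq]; norm_num

lemma inf4 (f : Fin 4 → ℝ) :
    (univ : Finset (Fin 4)).inf' univ_nonempty f
      = min (f 0) (min (f 1) (min (f 2) (f 3))) := by
  apply le_antisymm
  · exact le_min (Finset.inf'_le _ (mem_univ 0)) (le_min (Finset.inf'_le _ (mem_univ 1))
      (le_min (Finset.inf'_le _ (mem_univ 2)) (Finset.inf'_le _ (mem_univ 3))))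
  · apply Finset.le_inf'
    intro x _
    fin_cases x
    · exact min_le_left _ _
    · exact le_trans (min_le_right _ _) (min_le_left _ _)
    · exact le_trans (min_le_right _ _) (le_trans (min_le_right _ _) (min_le_left _ _))
    · exact le_trans (min_le_right _ _) (le_trans (min_le_right _ _) (min_le_right _ _))

set_option maxHeartbeats 4000000 in
theorem stmt_11 :
    ∃ (E : Fin 2 → Fin 4 → Matrix (Fin 2) (Fin 2) ℂ)
      (ρ : Fin 2 → Matrix (Fin 2) (Fin 2) ℂ)
      (F : Fin 2 → Matrix (Fin 2) (Fin 2) ℂ),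
      (∀ a x, (E a x).PosSemidef) ∧ (∀ x, ∑ a, E a x = 1) ∧
      (∀ a, (ρ a).PosSemidef ∧ (ρ a).trace = 1) ∧
      (∀ b, (F b).PosSemidef) ∧ (∑ b, F b = 1) ∧
      (∑ b₀ : Fin 2, ∑ b₁ : Fin 2, univ.inf' univ_nonempty
        (fun x : Fin 4 => ∑ a : Fin 2,
          (((E a x ⊗ₖ (ρ a ⊗ₖ F (if a = 0 then b₀ else b₁))) * W222).trace).re))
      = 2 - Real.sqrt 2 := by
  refine ⟨fun a x => (Er a x).map Complex.ofReal, fun a => (Rr a).map Complex.ofReal,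
    fun b => (Fr b).map Complex.ofReal, ?_, ?_, ?_, ?_, ?_, ?_⟩
  · intro a x
    apply psd_of_proj
    fin_cases a <;> fin_cases x <;> (ext i j; fin_cases i <;> fin_cases j) <;>
      simp [Er, Matrix.mul_apply, Fin.sum_univ_two, Matrix.map_apply,
        Matrix.conjTranspose_apply, ← Complex.ofReal_mul, ← Complex.ofReal_add] <;>
      norm_num
  · intro x
    fin_cases x <;> (ext i j; fin_cases i <;> fin_cases j) <;>
      simp [Er, Fin.sum_univ_two, Matrix.map_apply, Matrix.one_apply] <;> norm_num
  · intro a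
    constructor
    · apply psd_of_proj
      fin_cases a <;> (ext i j; fin_cases i <;> fin_cases j) <;>
        simp [Rr, Matrix.mul_apply, Fin.sum_univ_two, Matrix.map_apply,
          Matrix.conjTranspose_apply, ← Complex.ofReal_mul, ← Complex.ofReal_add] <;>
        norm_num
    · fin_cases a <;>
        simp [Rr, Matrix.trace, Matrix.diag, Fin.sum_univ_two, Matrix.map_apply] <;>
        norm_num
  · intro b
    apply psd_of_proj
    fin_cases b <;> (ext i j; fin_cases i <;> fin_cases j) <;>
      simp [Fr, Matrix.mul_apply, Fin.sum_univ_two, Matrix.map_apply,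
        Matrix.conjTranspose_apply, ← Complex.ofReal_mul, ← Complex.ofReal_add] <;>
      (push_cast
       first
       | ring1
       | linear_combination (-2 : ℝ) * qv_sq
       | linear_combination (2 : ℝ) * qv_sq
       | linear_combination (-2 : ℂ) * qv_sqc
       | linear_combination (2 : ℂ) * qv_sqc)
  · ext i j; fin_cases i <;> fin_cases j <;>
      simp [Fr, Fin.sum_univ_two, Matrix.map_apply, Matrix.one_apply] <;>
      norm_num [qv]
  · have key : ∀ b0 b1 : Fin 2, (univ : Finset (Fin 4)).inf' univ_nonempty
        (fun x : Fin 4 => ∑ a : Fin 2,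
          ((((Er a x).map Complex.ofReal ⊗ₖ ((Rr a).map Complex.ofReal ⊗ₖ
            (Fr (if a = 0 then b0 else b1)).map Complex.ofReal)) * W222).trace).re)
        = 1/2 - Real.sqrt 2 / 4 := by
      intro b0 b1
      rw [inf4]
      fin_cases b0 <;> fin_cases b1 <;>
        (simp only [Fin.sum_univ_two, tr_re]
         norm_num [Er, Rr, Fr, Matrix.cons_val_zero, Matrix.cons_val_one, Matrix.head_cons, qv,
           show (1:Fin 4) ≠ 0 by decide, show (2:Fin 4) ≠ 0 by decide,
           show (2:Fin 4) ≠ 1 by decide, show (3:Fin 4) ≠ 0 by decide,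
           show (3:Fin 4) ≠ 1 by decide, show (3:Fin 4) ≠ 2 by decide,
           show (1:Fin 2) ≠ 0 by decide]
         ring_nf
         simp only [min_def]
         split_ifs <;> linarith [sqrt2_nonneg, sqrt2_le_two])
    simp only [key]
    simp only [Fin.sum_univ_two]
    ring
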